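/- Let H = ℓ²(ℕ) with truncation projections P_n and Q̃_n = I − P_n. For any bounded operator B on ℓ², the distance from B to the nest algebra of causal operators equals the supremum of the norms of the 'anticausal corners': inf_{Q causal bounded} ‖B − Q‖ = sup_n ‖(I − Q̃_n) B Q̃_n‖. -/

import Mathlib

open scoped InnerProductSpace ComplexInnerProductSpace

noncomputable section

/-- The Hilbert space `ℓ²(ℕ)`. -/
abbrev L2 : Type := lp (fun _ : ℕ => ℂ) 2

/-- The standard orthonormal basis vectors of `ℓ²`. -/
def e (i : ℕ) : L2 := lp.single 2 i 1

/-- Truncation projection onto the first `n+1` coordinates. -/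
def Pn (n : ℕ) : L2 →L[ℂ] L2 :=
  ∑ i ∈ Finset.range (n + 1), (innerSL ℂ (e i)).smulRight (e i)

/-- Causal (lower-triangular) bounded operators. -/
def Causal (Q : L2 →L[ℂ] L2) : Prop :=
  ∀ n, Pn n ∘L Q ∘L Pn n = Pn n ∘L Q

lemma inner_e_e (i j : ℕ) : ⟪e i, e j⟫_ℂ = if i = j then 1 else 0 := by
  rw [e, e, lp.inner_single_left]
  rcases eq_or_ne i j with h | h
  · subst h; simp [lp.single_apply_self]
  · rw [lp.single_apply_ne 2 j 1 h]; simp [h]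

lemma orthonormal_e : Orthonormal ℂ e := by
  rw [orthonormal_iff_ite]
  intro i j
  simpa using inner_e_e i j

lemma Pn_apply (n : ℕ) (x : L2) :
    Pn n x = ∑ i ∈ Finset.range (n + 1), ⟪e i, x⟫_ℂ • e i := by
  simp [Pn, ContinuousLinearMap.sum_apply]

lemma inner_e_Pn (i n : ℕ) (x : L2) :
    ⟪e i, Pn n x⟫_ℂ = if i ≤ n then ⟪e i, x⟫_ℂ else 0 := by
  rw [Pn_apply, inner_sum]
  simp_rw [inner_smul_right, inner_e_e]
  simp_rw [mul_ite, mul_one, mul_zero, Finset.sum_ite_eq, Finset.mem_range, Nat.lt_succ_iff]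

lemma Pn_Pn {j k : ℕ} (h : j ≤ k) (x : L2) : Pn j (Pn k x) = Pn j x := by
  rw [Pn_apply j (Pn k x), Pn_apply j x]
  refine Finset.sum_congr rfl fun i hi => ?_
  rw [Finset.mem_range, Nat.lt_succ_iff] at hi
  rw [inner_e_Pn, if_pos (hi.trans h)]

lemma Pn_Pn' {j k : ℕ} (h : j ≤ k) (x : L2) : Pn k (Pn j x) = Pn j x := by
  rw [Pn_apply k (Pn j x)]
  simp_rw [inner_e_Pn]
  rw [Pn_apply j x]
  simp_rw [ ite_smul, zero_smul, Finset.sum_ite, Finset.sum_const_zero, add_zero]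
  refine Finset.sum_congr ?_ fun i _ => rfl
  ext i
  simp only [Finset.mem_filter, Finset.mem_range, Nat.lt_succ_iff]
  omega

lemma inner_sub_Pn (n : ℕ) (x y : L2) : ⟪x - Pn n x, Pn n y⟫_ℂ = 0 := by
  rw [Pn_apply n y, inner_sum]
  refine Finset.sum_eq_zero fun i hi => ?_
  rw [Finset.mem_range, Nat.lt_succ_iff] at hi
  rw [inner_smul_right, ← inner_conj_symm (x - Pn n x) (e i), inner_sub_right, inner_e_Pn, if_pos hi,
    sub_self, map_zero, mul_zero]

lemma pythag (n : ℕ) (x : L2) : ‖x‖ ^ 2 = ‖x - Pn n x‖ ^ 2 + ‖Pn n x‖ ^ 2 := by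
  have h := norm_add_sq (𝕜 := ℂ) (x - Pn n x) (Pn n x)
  rw [sub_add_cancel] at h
  rw [h, inner_sub_Pn]
  simp

lemma norm_Pn_le (n : ℕ) (x : L2) : ‖Pn n x‖ ≤ ‖x‖ := by
  have h := pythag n x
  nlinarith [norm_nonneg (x - Pn n x), norm_nonneg (Pn n x), norm_nonneg x]

lemma norm_sub_Pn_le (n : ℕ) (x : L2) : ‖x - Pn n x‖ ≤ ‖x‖ := by
  have h := pythag n x
  nlinarith [norm_nonneg (x - Pn n x), norm_nonneg (Pn n x), norm_nonneg x]

lemma Pn_succ_apply (k : ℕ) (y : L2) :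
    Pn (k + 1) y = Pn k y + ⟪e (k + 1), y⟫_ℂ • e (k + 1) := by
  rw [Pn_apply, Pn_apply, Finset.sum_range_succ]

lemma norm_e (i : ℕ) : ‖e i‖ = 1 := by
  have h : ⟪e i, e i⟫_ℂ = 1 := by rw [inner_e_e]; simp
  have := inner_self_eq_norm_sq_to_K (𝕜 := ℂ) (e i)
  rw [h] at this
  have h2 : (‖e i‖ : ℂ) ^ 2 = 1 := this.symm
  have h3 : ‖e i‖ ^ 2 = 1 := by exact_mod_cast h2
  nlinarith [norm_nonneg (e i)]

lemma inner_Pn_e_succ (k : ℕ) (y : L2) : ⟪Pn k y, e (k + 1)⟫_ℂ = 0 := by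
  rw [← inner_conj_symm, inner_e_Pn, if_neg (by omega), map_zero]

lemma norm_Pn_add_smul_e (k : ℕ) (y : L2) (c : ℂ) :
    ‖Pn k y + c • e (k + 1)‖ ^ 2 = ‖Pn k y‖ ^ 2 + ‖c‖ ^ 2 := by
  rw [norm_add_sq (𝕜 := ℂ), inner_smul_right, inner_Pn_e_succ, mul_zero]
  simp [norm_smul, norm_e]

lemma norm_Pn_succ_sq (k : ℕ) (y : L2) :
    ‖Pn (k + 1) y‖ ^ 2 = ‖Pn k y‖ ^ 2 + ‖⟪e (k + 1), y⟫_ℂ‖ ^ 2 := by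
  rw [Pn_succ_apply, norm_Pn_add_smul_e]

lemma Pn_e (n i : ℕ) : Pn n (e i) = if i ≤ n then e i else 0 := by
  rw [Pn_apply]
  simp_rw [inner_e_e]
  rcases le_or_gt i n with h | h
  · rw [if_pos h, Finset.sum_eq_single i]
    · simp
    · intro b _ hb; simp [hb]
    · intro hi; exact absurd (Finset.mem_range.2 (Nat.lt_succ_of_le h)) hi
  · rw [if_neg (not_le.2 h)]
    refine Finset.sum_eq_zero fun b hb => ?_
    rw [Finset.mem_range, Nat.lt_succ_iff] at hb
    rw [if_neg (by omega), zero_smul]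

/-! ### The shifted inner product space -/

def Hnu (_C : L2 →L[ℂ] L2) (_ν2 : ℝ) : Type := L2

instance (C : L2 →L[ℂ] L2) (ν2 : ℝ) : AddCommGroup (Hnu C ν2) :=
  inferInstanceAs (AddCommGroup L2)

instance (C : L2 →L[ℂ] L2) (ν2 : ℝ) : Module ℂ (Hnu C ν2) :=
  inferInstanceAs (Module ℂ L2)

def ofH {C : L2 →L[ℂ] L2} {ν2 : ℝ} (x : Hnu C ν2) : L2 := x

def toH (C : L2 →L[ℂ] L2) (ν2 : ℝ) (x : L2) : Hnu C ν2 := x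

lemma ofH_add {C ν2} (x y : Hnu C ν2) : ofH (x + y) = ofH x + ofH y := rfl
lemma ofH_smul {C ν2} (c : ℂ) (x : Hnu C ν2) : ofH (c • x) = c • ofH x := rfl

lemma inner_formula (C : L2 →L[ℂ] L2) (ν2 : ℝ) (x : L2) :
    (ν2 : ℂ) * ⟪x, x⟫_ℂ - ⟪C x, C x⟫_ℂ = ((ν2 * ‖x‖ ^ 2 - ‖C x‖ ^ 2 : ℝ) : ℂ) := by
  rw [inner_self_eq_norm_sq_to_K, inner_self_eq_norm_sq_to_K,
    show (RCLike.ofReal : ℝ → ℂ) = Complex.ofReal from rfl]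
  push_cast
  ring

def nuCore (C : L2 →L[ℂ] L2) (b2 ν2 : ℝ) (hb : ∀ x, ‖C x‖ ^ 2 ≤ b2 * ‖x‖ ^ 2)
    (hν2 : b2 < ν2) : InnerProductSpace.Core ℂ (Hnu C ν2) where
  inner x y := (ν2 : ℂ) * ⟪ofH x, ofH y⟫_ℂ - ⟪C (ofH x), C (ofH y)⟫_ℂ
  conj_inner_symm x y := by
    simp only [map_sub, map_mul, inner_conj_symm, Complex.conj_ofReal]
  re_inner_nonneg x := by
    show 0 ≤ RCLike.re ((ν2 : ℂ) * ⟪ofH x, ofH x⟫_ℂ - ⟪C (ofH x), C (ofH x)⟫_ℂ)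
    rw [inner_formula]
    have h : RCLike.re ((ν2 * ‖ofH x‖ ^ 2 - ‖C (ofH x)‖ ^ 2 : ℝ) : ℂ)
        = (ν2 * ‖ofH x‖ ^ 2 - ‖C (ofH x)‖ ^ 2 : ℝ) := by norm_cast
    rw [h]
    nlinarith [hb (ofH x)]
  add_left x y z := by
    show (ν2 : ℂ) * ⟪ofH (x + y), ofH z⟫_ℂ - ⟪C (ofH (x + y)), C (ofH z)⟫_ℂ = _
    rw [ofH_add, map_add, inner_add_left, inner_add_left]
    ring
  smul_left x y c := by
    show (ν2 : ℂ) * ⟪ofH (c • x), ofH y⟫_ℂ - ⟪C (ofH (c • x)), C (ofH y)⟫_ℂ = _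
    rw [ofH_smul, map_smul, inner_smul_left, inner_smul_left]
    ring
  definite x hx := by
    have h1 : (ν2 : ℂ) * ⟪ofH x, ofH x⟫_ℂ - ⟪C (ofH x), C (ofH x)⟫_ℂ = 0 := hx
    rw [inner_formula] at h1
    have h2 : (ν2 * ‖ofH x‖ ^ 2 - ‖C (ofH x)‖ ^ 2 : ℝ) = 0 := by exact_mod_cast h1
    have h3 : ‖ofH x‖ = 0 := by
      by_contra h
      have hpos : 0 < ‖ofH x‖ ^ 2 := by positivity
      nlinarith [hb (ofH x), mul_pos (sub_pos.2 hν2) hpos]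
    exact norm_eq_zero.mp h3

lemma step (B C : L2 →L[ℂ] L2) (k : ℕ) (μ2 b2 ν2 : ℝ)
    (hμ2 : 0 ≤ μ2) (hb2 : μ2 ≤ b2) (hν2 : b2 < ν2)
    (hb : ∀ x, ‖C x‖ ^ 2 ≤ b2 * ‖x‖ ^ 2)
    (hcol : ∀ x, Pn (k + 1) x = 0 →
      ‖C x‖ ^ 2 + ‖⟪e (k + 1), B x⟫_ℂ‖ ^ 2 ≤ μ2 * ‖x‖ ^ 2) :
    ∃ r : L2 →L[ℂ] ℂ, (∀ x, Pn (k + 1) x = 0 → r x = ⟪e (k + 1), B x⟫_ℂ) ∧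
      ∀ x, ‖C x‖ ^ 2 + ‖r x‖ ^ 2 ≤ ν2 * ‖x‖ ^ 2 := by
  classical
  have hν2pos : (0:ℝ) < ν2 := lt_of_le_of_lt (hμ2.trans hb2) hν2
  letI core : InnerProductSpace.Core ℂ (Hnu C ν2) := nuCore C b2 ν2 hb hν2
  letI : NormedAddCommGroup (Hnu C ν2) :=
    @InnerProductSpace.Core.toNormedAddCommGroup ℂ (Hnu C ν2) _ _ _ core
  letI : InnerProductSpace ℂ (Hnu C ν2) := InnerProductSpace.ofCore core.toCore
  have hnorm : ∀ x : Hnu C ν2, ‖x‖ ^ 2 = ν2 * ‖ofH x‖ ^ 2 - ‖C (ofH x)‖ ^ 2 := by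
    intro x
    have h0 : ‖x‖ ^ 2 = RCLike.re (⟪x, x⟫_ℂ) := InnerProductSpace.norm_sq_eq_re_inner (𝕜 := ℂ) x
    have h1 : (⟪x, x⟫_ℂ : ℂ) = ((ν2 * ‖ofH x‖ ^ 2 - ‖C (ofH x)‖ ^ 2 : ℝ) : ℂ) := by
      rw [show (⟪x, x⟫_ℂ : ℂ) = (ν2 : ℂ) * ⟪ofH x, ofH x⟫_ℂ - ⟪C (ofH x), C (ofH x)⟫_ℂ
        from rfl, inner_formula]
    rw [h0, h1]
    norm_cast
  -- the subspace of vectors supported beyond k+1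
  let M : Submodule ℂ (Hnu C ν2) :=
  { carrier := {x | Pn (k + 1) (ofH x) = 0}
    add_mem' := by
      intro a b ha hb
      show Pn (k + 1) (ofH (a + b)) = 0
      rw [ofH_add, map_add, ha, hb, add_zero]
    zero_mem' := by
      show Pn (k + 1) (ofH (0 : Hnu C ν2)) = 0
      show Pn (k + 1) (0 : L2) = 0
      rw [map_zero]
    smul_mem' := by
      intro c x hx
      show Pn (k + 1) (ofH (c • x)) = 0
      rw [ofH_smul, map_smul, hx, smul_zero] }
  have hMnorm : ∀ x : M, ‖(x : Hnu C ν2)‖ ^ 2 = ν2 * ‖ofH (x : Hnu C ν2)‖ ^ 2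
      - ‖C (ofH (x : Hnu C ν2))‖ ^ 2 := fun x => hnorm _
  -- the functional on M
  let a0 : M →ₗ[ℂ] ℂ :=
  { toFun := fun x => ⟪e (k + 1), B (ofH (x : Hnu C ν2))⟫_ℂ
    map_add' := by
      intro x y
      simp only [Submodule.coe_add, ofH_add, map_add, inner_add_right]
    map_smul' := by
      intro c x
      simp only [Submodule.coe_smul, ofH_smul, map_smul, inner_smul_right,
        RingHom.id_apply, smul_eq_mul] }
  have ha0 : ∀ x : M, ‖a0 x‖ ≤ 1 * ‖x‖ := by
    intro x
    have hx : Pn (k + 1) (ofH (x : Hnu C ν2)) = 0 := x.2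
    have h1 := hcol (ofH (x : Hnu C ν2)) hx
    have h2 : ‖x‖ ^ 2 = ‖(x : Hnu C ν2)‖ ^ 2 := rfl
    have h3 : ‖a0 x‖ ^ 2 ≤ ‖x‖ ^ 2 := by
      rw [h2, hMnorm x]
      have : ‖a0 x‖ = ‖⟪e (k + 1), B (ofH (x : Hnu C ν2))⟫_ℂ‖ := rfl
      rw [this]
      nlinarith [hb (ofH (x : Hnu C ν2))]
    rw [one_mul]
    exact le_of_pow_le_pow_left₀ two_ne_zero (norm_nonneg _) h3
  let a : M →L[ℂ] ℂ := a0.mkContinuous 1 ha0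
  obtain ⟨g, hg, hgnorm⟩ := exists_extension_norm_eq M a
  have hgle : ‖g‖ ≤ 1 := by
    rw [hgnorm]
    exact LinearMap.mkContinuous_norm_le a0 zero_le_one ha0
  have hgbound : ∀ y : Hnu C ν2, ‖g y‖ ^ 2 ≤ ν2 * ‖ofH y‖ ^ 2 - ‖C (ofH y)‖ ^ 2 := by
    intro y
    have h1 : ‖g y‖ ≤ ‖y‖ := by
      calc ‖g y‖ ≤ ‖g‖ * ‖y‖ := g.le_opNorm y
      _ ≤ 1 * ‖y‖ := mul_le_mul_of_nonneg_right hgle (norm_nonneg y)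
      _ = ‖y‖ := one_mul _
    have h2 : ‖g y‖ ^ 2 ≤ ‖y‖ ^ 2 := by
      have := norm_nonneg (g y)
      nlinarith [norm_nonneg y]
    rw [← hnorm y]
    exact h2
  -- build r
  let r0 : L2 →ₗ[ℂ] ℂ :=
  { toFun := fun x => g (toH C ν2 x)
    map_add' := fun x y => by
      show g (toH C ν2 (x + y)) = g (toH C ν2 x) + g (toH C ν2 y)
      rw [show toH C ν2 (x + y) = toH C ν2 x + toH C ν2 y from rfl, map_add]
    map_smul' := fun c x => by
      show g (toH C ν2 (c • x)) = c • g (toH C ν2 x)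
      rw [show toH C ν2 (c • x) = c • toH C ν2 x from rfl, map_smul] }
  have hr0 : ∀ x : L2, ‖r0 x‖ ^ 2 ≤ ν2 * ‖x‖ ^ 2 - ‖C x‖ ^ 2 := by
    intro x
    have := hgbound (toH C ν2 x)
    exact this
  have hr0' : ∀ x : L2, ‖r0 x‖ ≤ Real.sqrt ν2 * ‖x‖ := by
    intro x
    have h1 : ‖r0 x‖ ^ 2 ≤ (Real.sqrt ν2 * ‖x‖) ^ 2 := by
      rw [mul_pow, Real.sq_sqrt hν2pos.le]
      nlinarith [hr0 x, sq_nonneg ‖C x‖]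
    exact le_of_pow_le_pow_left₀ two_ne_zero
      (mul_nonneg (Real.sqrt_nonneg _) (norm_nonneg _)) h1
  refine ⟨r0.mkContinuous (Real.sqrt ν2) hr0', ?_, ?_⟩
  · intro x hx
    have hxM : toH C ν2 x ∈ M := hx
    have h1 := hg ⟨toH C ν2 x, hxM⟩
    have h2 : a ⟨toH C ν2 x, hxM⟩ = ⟪e (k + 1), B x⟫_ℂ := rfl
    exact h1.trans h2
  · intro x
    have h1 : ‖r0 x‖ ^ 2 ≤ ν2 * ‖x‖ ^ 2 - ‖C x‖ ^ 2 := hr0 x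
    have h2 : (r0.mkContinuous (Real.sqrt ν2) hr0') x = r0 x := rfl
    rw [h2]
    linarith

/-! ### The inductive construction -/

def GoodR (B : L2 →L[ℂ] L2) (μ2 ε2 : ℝ) (k : ℕ) (C : L2 →L[ℂ] L2) : Prop :=
  (∀ x, Pn k (C x) = C x) ∧
  (∀ j, j ≤ k → ∀ x, Pn j (C (x - Pn j x)) = Pn j (B (x - Pn j x))) ∧
  (∀ x, ‖C x‖ ^ 2 ≤ (μ2 + ε2 * (1 - (1/2 : ℝ) ^ k)) * ‖x‖ ^ 2)

lemma base (B : L2 →L[ℂ] L2) (μ2 ε2 : ℝ)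
    (hμ : ∀ n x, ‖Pn n (B (x - Pn n x))‖ ^ 2 ≤ μ2 * ‖x‖ ^ 2) :
    GoodR B μ2 ε2 0 (Pn 0 ∘L B ∘L (1 - Pn 0)) := by
  have happ : ∀ x, (Pn 0 ∘L B ∘L (1 - Pn 0)) x = Pn 0 (B (x - Pn 0 x)) := by
    intro x
    simp [ContinuousLinearMap.comp_apply, ContinuousLinearMap.sub_apply]
  refine ⟨fun x => ?_, fun j hj x => ?_, fun x => ?_⟩
  · rw [happ, Pn_Pn le_rfl]
  · interval_cases j
    have hy : Pn 0 (x - Pn 0 x) = 0 := by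
      rw [map_sub, Pn_Pn le_rfl, sub_self]
    rw [happ, hy, sub_zero, Pn_Pn le_rfl]
  · rw [happ]
    have h := hμ 0 x
    have : μ2 + ε2 * (1 - (1/2 : ℝ) ^ 0) = μ2 := by norm_num
    rw [this]
    exact h

lemma step_ex (B : L2 →L[ℂ] L2) (μ2 ε2 : ℝ) (hμ2 : 0 ≤ μ2) (hε2 : 0 < ε2)
    (hμ : ∀ n x, ‖Pn n (B (x - Pn n x))‖ ^ 2 ≤ μ2 * ‖x‖ ^ 2)
    (k : ℕ) (C : L2 →L[ℂ] L2) (h : GoodR B μ2 ε2 k C) :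
    ∃ C', GoodR B μ2 ε2 (k + 1) C' ∧ ∀ x, Pn k (C' x) = C x := by
  obtain ⟨h1, h2, h3⟩ := h
  set b2 : ℝ := μ2 + ε2 * (1 - (1/2 : ℝ) ^ k) with hb2def
  set ν2 : ℝ := μ2 + ε2 * (1 - (1/2 : ℝ) ^ (k + 1)) with hν2def
  have hpowpos : (0:ℝ) < (1/2 : ℝ) ^ k := by positivity
  have hpowle : ((1:ℝ)/2) ^ k ≤ 1 := pow_le_one₀ (by norm_num) (by norm_num)
  have hb2 : μ2 ≤ b2 := by rw [hb2def]; nlinarith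
  have hν2 : b2 < ν2 := by
    rw [hb2def, hν2def]
    have : ((1:ℝ)/2) ^ (k+1) < ((1:ℝ)/2) ^ k := by
      rw [pow_succ]
      nlinarith
    nlinarith
  -- key : on the kernel of `Pn (k+1)`, `C` agrees with `Pn k ∘ B`
  have hkey : ∀ x, Pn (k + 1) x = 0 → C x = Pn k (B x) := by
    intro x hx
    have hPk : Pn k x = 0 := by
      have := Pn_Pn (Nat.le_succ k) x
      rw [hx, map_zero] at this
      exact this.symm
    have hxs : x - Pn k x = x := by rw [hPk, sub_zero]
    have := h2 k le_rfl x
    rw [hxs, h1 x] at this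
    exact this
  have hcol : ∀ x, Pn (k + 1) x = 0 →
      ‖C x‖ ^ 2 + ‖⟪e (k + 1), B x⟫_ℂ‖ ^ 2 ≤ μ2 * ‖x‖ ^ 2 := by
    intro x hx
    rw [hkey x hx]
    have hdec := norm_Pn_succ_sq k (B x)
    have hxs : x - Pn (k + 1) x = x := by rw [hx, sub_zero]
    have := hμ (k + 1) x
    rw [hxs] at this
    linarith
  obtain ⟨r, hr1, hr2⟩ := step B C k μ2 b2 ν2 hμ2 hb2 hν2 h3 hcol
  refine ⟨C + r.smulRight (e (k + 1)), ⟨fun x => ?_, fun j hj x => ?_, fun x => ?_⟩,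
    fun x => ?_⟩
  · -- Pn (k+1) invariance
    rw [ContinuousLinearMap.add_apply, ContinuousLinearMap.smulRight_apply, map_add,
      map_smul, Pn_e, if_pos le_rfl, ← h1 x, Pn_Pn' (Nat.le_succ k), h1 x]
  · -- corners
    rcases Nat.lt_succ_iff_lt_or_eq.mp (Nat.lt_succ_of_le hj) with hj' | hj'
    · have hjk : j ≤ k := by omega
      set y := x - Pn j x
      rw [ContinuousLinearMap.add_apply, ContinuousLinearMap.smulRight_apply, map_add,
        map_smul, Pn_e, if_neg (by omega), smul_zero, add_zero]
      exact h2 j hjk x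
    · subst hj'
      set y := x - Pn (k + 1) x with hydef
      have hy : Pn (k + 1) y = 0 := by
        rw [hydef, map_sub, Pn_Pn le_rfl, sub_self]
      rw [ContinuousLinearMap.add_apply, ContinuousLinearMap.smulRight_apply, map_add,
        map_smul, Pn_e, if_pos le_rfl, hkey y hy, hr1 y hy, Pn_Pn' (Nat.le_succ k),
        Pn_succ_apply]
  · -- norm bound
    rw [ContinuousLinearMap.add_apply, ContinuousLinearMap.smulRight_apply, ← h1 x,
      norm_Pn_add_smul_e, h1 x]
    exact hr2 x
  · -- compatibility
    rw [ContinuousLinearMap.add_apply, ContinuousLinearMap.smulRight_apply, map_add,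
      map_smul, Pn_e, if_neg (by omega), smul_zero, add_zero, h1 x]

lemma exists_T (B : L2 →L[ℂ] L2) (μ2 ε2 : ℝ) (hμ2 : 0 ≤ μ2) (hε2 : 0 < ε2)
    (hμ : ∀ n x, ‖Pn n (B (x - Pn n x))‖ ^ 2 ≤ μ2 * ‖x‖ ^ 2) :
    ∃ T : L2 →L[ℂ] L2, (∀ j x, Pn j (T (x - Pn j x)) = Pn j (B (x - Pn j x))) ∧
      ∀ x, ‖T x‖ ≤ Real.sqrt (μ2 + ε2) * ‖x‖ := by
  classical
  let R : ∀ k : ℕ, {C : L2 →L[ℂ] L2 // GoodR B μ2 ε2 k C} := fun k =>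
    Nat.rec ⟨Pn 0 ∘L B ∘L (1 - Pn 0), base B μ2 ε2 hμ⟩
      (fun k p => ⟨Classical.choose (step_ex B μ2 ε2 hμ2 hε2 hμ k p.1 p.2),
        (Classical.choose_spec (step_ex B μ2 ε2 hμ2 hε2 hμ k p.1 p.2)).1⟩) k
  have hcompat : ∀ k x, Pn k ((R (k + 1)).1 x) = (R k).1 x := fun k =>
    (Classical.choose_spec (step_ex B μ2 ε2 hμ2 hε2 hμ k (R k).1 (R k).2)).2
  have hmono : ∀ j k, j ≤ k → ∀ x, Pn j ((R k).1 x) = (R j).1 x := by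
    intro j k hjk
    induction k with
    | zero =>
      intro x
      have : j = 0 := Nat.le_zero.mp hjk
      subst this
      exact (R 0).2.1 x
    | succ k ih =>
      intro x
      rcases Nat.lt_succ_iff_lt_or_eq.mp (Nat.lt_succ_of_le hjk) with hj' | hj'
      · have hjk' : j ≤ k := by omega
        rw [← Pn_Pn hjk' ((R (k+1)).1 x), hcompat k x]
        exact ih hjk' x
      · subst hj'
        exact (R (k+1)).2.1 x
  have hbound : ∀ k x, ‖(R k).1 x‖ ^ 2 ≤ (μ2 + ε2) * ‖x‖ ^ 2 := by
    intro k x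
    have h := (R k).2.2.2 x
    have hq : (0:ℝ) < (1/2 : ℝ) ^ k := by positivity
    nlinarith [sq_nonneg ‖x‖, mul_nonneg (mul_nonneg hε2.le hq.le) (sq_nonneg ‖x‖)]
  have hfmono : ∀ x, Monotone (fun k => ‖(R k).1 x‖ ^ 2) := by
    intro x j k hjk
    have h1 : ‖(R j).1 x‖ = ‖Pn j ((R k).1 x)‖ := by rw [hmono j k hjk]
    simp only
    rw [h1]
    have := norm_Pn_le j ((R k).1 x)
    nlinarith [norm_nonneg (Pn j ((R k).1 x))]
  have hfbdd : ∀ x, BddAbove (Set.range fun k => ‖(R k).1 x‖ ^ 2) := by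
    intro x
    refine ⟨(μ2 + ε2) * ‖x‖ ^ 2, ?_⟩
    rintro y ⟨k, rfl⟩
    exact hbound k x
  have hdiff : ∀ x (p q : ℕ), p ≤ q →
      ‖(R q).1 x - (R p).1 x‖ ^ 2 = ‖(R q).1 x‖ ^ 2 - ‖(R p).1 x‖ ^ 2 := by
    intro x p q hpq
    rw [← hmono p q hpq x]
    have := pythag p ((R q).1 x)
    linarith
  have hcauchy : ∀ x, CauchySeq (fun k => (R k).1 x) := by
    intro x
    set f : ℕ → ℝ := fun k => ‖(R k).1 x‖ ^ 2 with hfdef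
    set L : ℝ := ⨆ k, f k with hLdef
    have htL : Filter.Tendsto f Filter.atTop (nhds L) :=
      tendsto_atTop_ciSup (hfmono x) (hfbdd x)
    refine cauchySeq_of_le_tendsto_0 (fun N => Real.sqrt (L - f N)) ?_ ?_
    · intro n m N hn hm
      have key : ∀ p q : ℕ, N ≤ p → N ≤ q → p ≤ q →
          dist ((R q).1 x) ((R p).1 x) ≤ Real.sqrt (L - f N) := by
        intro p q hp hq hpq
        rw [dist_eq_norm]
        have h1 : ‖(R q).1 x - (R p).1 x‖ ^ 2 = f q - f p := hdiff x p q hpq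
        have h2 : f q ≤ L := le_ciSup (hfbdd x) q
        have h3 : f N ≤ f p := hfmono x hp
        have h4 : ‖(R q).1 x - (R p).1 x‖ ^ 2 ≤ L - f N := by linarith
        calc ‖(R q).1 x - (R p).1 x‖
            = Real.sqrt (‖(R q).1 x - (R p).1 x‖ ^ 2) := (Real.sqrt_sq (norm_nonneg _)).symm
          _ ≤ Real.sqrt (L - f N) := Real.sqrt_le_sqrt h4
      rcases le_total n m with hnm | hnm
      · rw [dist_comm]
        exact key n m hn hm hnm
      · exact key m n hm hn hnm
    · have h0 : Filter.Tendsto (fun N => L - f N) Filter.atTop (nhds 0) := by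
        have := htL.const_sub L
        simpa using this
      have := (Real.continuous_sqrt.tendsto 0).comp h0
      simpa [Function.comp_def] using this
  have hconv : ∀ x, ∃ y, Filter.Tendsto (fun k => (R k).1 x) Filter.atTop (nhds y) :=
    fun x => cauchySeq_tendsto_of_complete (hcauchy x)
  choose F hF using hconv
  have hFbound : ∀ x, ‖F x‖ ≤ Real.sqrt (μ2 + ε2) * ‖x‖ := by
    intro x
    refine le_of_tendsto (hF x).norm (Filter.Eventually.of_forall fun k => ?_)
    have h1 : ‖(R k).1 x‖ ^ 2 ≤ (Real.sqrt (μ2 + ε2) * ‖x‖) ^ 2 := by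
      rw [mul_pow, Real.sq_sqrt (by nlinarith : (0:ℝ) ≤ μ2 + ε2)]
      exact hbound k x
    exact le_of_pow_le_pow_left₀ two_ne_zero
      (mul_nonneg (Real.sqrt_nonneg _) (norm_nonneg _)) h1
  let Flin : L2 →ₗ[ℂ] L2 :=
  { toFun := F
    map_add' := by
      intro x y
      have h1 : Filter.Tendsto (fun k => (R k).1 (x + y)) Filter.atTop (nhds (F x + F y)) := by
        have := (hF x).add (hF y)
        simpa [map_add] using this
      exact tendsto_nhds_unique (hF (x + y)) h1
    map_smul' := by
      intro c x
      have h1 : Filter.Tendsto (fun k => (R k).1 (c • x)) Filter.atTop (nhds (c • F x)) := by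
        have := (hF x).const_smul c
        simpa [map_smul] using this
      exact tendsto_nhds_unique (hF (c • x)) h1 }
  let T : L2 →L[ℂ] L2 := Flin.mkContinuous (Real.sqrt (μ2 + ε2)) hFbound
  have hPT : ∀ j x, Pn j (T x) = (R j).1 x := by
    intro j x
    have h1 : Filter.Tendsto (fun k => Pn j ((R k).1 x)) Filter.atTop (nhds (Pn j (F x))) :=
      ((Pn j).continuous.tendsto (F x)).comp (hF x)
    have h2 : (fun k => Pn j ((R k).1 x)) =ᶠ[Filter.atTop] fun _ => (R j).1 x := by
      filter_upwards [Filter.eventually_ge_atTop j] with k hk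
      exact hmono j k hk x
    have h3 : Filter.Tendsto (fun _ : ℕ => (R j).1 x) Filter.atTop (nhds (Pn j (F x))) :=
      h1.congr' h2
    have h4 : Pn j (F x) = (R j).1 x := tendsto_nhds_unique h3 tendsto_const_nhds
    exact h4
  refine ⟨T, fun j x => ?_, hFbound⟩
  set y := x - Pn j x
  rw [hPT j y, ← (R j).2.1 y]
  exact (R j).2.2.1 j le_rfl x

/-- Arveson's distance formula: the distance from a bounded operator `B` on `ℓ²` to the
nest algebra of causal operators equals the supremum of the norms of the anticausal
corners `P_n B (I − P_n)`. -/
theorem stmt13 (B : L2 →L[ℂ] L2) :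
    sInf {r : ℝ | ∃ Q : L2 →L[ℂ] L2, Causal Q ∧ r = ‖B - Q‖} =
      ⨆ n : ℕ, ‖Pn n ∘L B ∘L (1 - Pn n)‖ := by
  classical
  set S : Set ℝ := {r : ℝ | ∃ Q : L2 →L[ℂ] L2, Causal Q ∧ r = ‖B - Q‖} with hSdef
  set μ : ℝ := ⨆ n : ℕ, ‖Pn n ∘L B ∘L (1 - Pn n)‖ with hμdef
  have happ : ∀ (A : L2 →L[ℂ] L2) n x, (Pn n ∘L A ∘L (1 - Pn n)) x = Pn n (A (x - Pn n x)) := by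
    intro A n x
    simp [ContinuousLinearMap.comp_apply, ContinuousLinearMap.sub_apply]
  have hbddA : BddAbove (Set.range fun n : ℕ => ‖Pn n ∘L B ∘L (1 - Pn n)‖) := by
    refine ⟨‖B‖, ?_⟩
    rintro y ⟨n, rfl⟩
    refine ContinuousLinearMap.opNorm_le_bound _ (norm_nonneg B) fun x => ?_
    rw [happ]
    calc ‖Pn n (B (x - Pn n x))‖ ≤ ‖B (x - Pn n x)‖ := norm_Pn_le _ _
      _ ≤ ‖B‖ * ‖x - Pn n x‖ := B.le_opNorm _
      _ ≤ ‖B‖ * ‖x‖ := mul_le_mul_of_nonneg_left (norm_sub_Pn_le n x) (norm_nonneg B)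
  have hμ0 : 0 ≤ μ := Real.iSup_nonneg fun n => norm_nonneg _
  have hμn : ∀ n, ‖Pn n ∘L B ∘L (1 - Pn n)‖ ≤ μ := fun n => le_ciSup hbddA n
  have hSne : S.Nonempty := by
    refine ⟨‖B - 0‖, 0, fun n => ?_, rfl⟩
    ext x
    simp
  have hSbdd : BddBelow S := by
    refine ⟨0, ?_⟩
    rintro r ⟨Q, hQ, rfl⟩
    exact norm_nonneg _
  apply le_antisymm
  · -- hard direction: sInf ≤ μ
    refine le_of_forall_pos_le_add fun δ hδ => ?_
    have hε2 : (0:ℝ) < 2 * μ * δ + δ ^ 2 := by nlinarith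
    have hμpt : ∀ n x, ‖Pn n (B (x - Pn n x))‖ ^ 2 ≤ μ ^ 2 * ‖x‖ ^ 2 := by
      intro n x
      have h1 : ‖Pn n (B (x - Pn n x))‖ ≤ μ * ‖x‖ := by
        rw [← happ B n x]
        calc ‖(Pn n ∘L B ∘L (1 - Pn n)) x‖ ≤ ‖Pn n ∘L B ∘L (1 - Pn n)‖ * ‖x‖ :=
          ContinuousLinearMap.le_opNorm _ _
        _ ≤ μ * ‖x‖ := mul_le_mul_of_nonneg_right (hμn n) (norm_nonneg x)
      nlinarith [norm_nonneg (Pn n (B (x - Pn n x))), norm_nonneg x]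
    obtain ⟨T, hT1, hT2⟩ := exists_T B (μ ^ 2) (2 * μ * δ + δ ^ 2) (sq_nonneg μ) hε2 hμpt
    have hTnorm : ‖T‖ ≤ μ + δ := by
      refine ContinuousLinearMap.opNorm_le_bound _ (by linarith) fun x => ?_
      have h1 := hT2 x
      have h2 : Real.sqrt (μ ^ 2 + (2 * μ * δ + δ ^ 2)) = μ + δ := by
        rw [show μ ^ 2 + (2 * μ * δ + δ ^ 2) = (μ + δ) ^ 2 by ring]
        exact Real.sqrt_sq (by linarith)
      rwa [h2] at h1
    have hQc : Causal (B - T) := by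
      intro n
      refine ContinuousLinearMap.ext fun x => ?_
      simp only [ContinuousLinearMap.comp_apply]
      show Pn n ((B - T) (Pn n x)) = Pn n ((B - T) x)
      have hc := hT1 n x
      have h1 : Pn n ((B - T) (x - Pn n x)) = 0 := by
        rw [ContinuousLinearMap.sub_apply, map_sub, hc, sub_self]
      have h2 : (B - T) (x - Pn n x) = (B - T) x - (B - T) (Pn n x) := by
        rw [map_sub]
      rw [h2, map_sub, sub_eq_zero] at h1
      exact h1.symm
    have hmem : ‖B - (B - T)‖ ∈ S := ⟨B - T, hQc, rfl⟩
    have h3 : ‖B - (B - T)‖ = ‖T‖ := by rw [sub_sub_cancel]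
    calc sInf S ≤ ‖B - (B - T)‖ := csInf_le hSbdd hmem
      _ = ‖T‖ := h3
      _ ≤ μ + δ := hTnorm
  · -- easy direction: μ ≤ sInf
    refine le_csInf hSne ?_
    rintro r ⟨Q, hQ, rfl⟩
    refine ciSup_le fun n => ?_
    refine ContinuousLinearMap.opNorm_le_bound _ (norm_nonneg _) fun x => ?_
    rw [happ]
    have hzero : Pn n (Q (x - Pn n x)) = 0 := by
      have := congrArg (fun A : L2 →L[ℂ] L2 => A x) (hQ n)
      simp only [ContinuousLinearMap.comp_apply] at this
      rw [map_sub, map_sub, this, sub_self]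
    have heq : Pn n ((B - Q) (x - Pn n x)) = Pn n (B (x - Pn n x)) := by
      rw [ContinuousLinearMap.sub_apply, map_sub (Pn n), hzero, sub_zero]
    rw [← heq]
    calc ‖Pn n ((B - Q) (x - Pn n x))‖ ≤ ‖(B - Q) (x - Pn n x)‖ := norm_Pn_le _ _
      _ ≤ ‖B - Q‖ * ‖x - Pn n x‖ := (B - Q).le_opNorm _
      _ ≤ ‖B - Q‖ * ‖x‖ := mul_le_mul_of_nonneg_left (norm_sub_Pn_le n x) (norm_nonneg _)
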